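/- Let g = g₀ ⊕ Z be a finite-dimensional reductive Lie algebra (g₀ semisimple, Z the center) and T_λ a conformal averaging operator on g such that g₀ ⊆ T_*(g). Then T_*(g₀) = g₀ and T_*(Z) ⊆ Z; moreover the restriction of T_λ to g₀ is an ordinary averaging operator on g₀ (i.e., T_λ(a) = T₀(a) ∈ g₀ for a ∈ g₀). -/

import Mathlib

open Finset

private lemma coeff_vanish_one {V : Type*} [AddCommGroup V] [Module ℂ V]
    {D : ℕ} {v : ℕ → V} (h : ∀ t : ℂ, ∑ n ∈ range D, t ^ n • v n = 0) :
    ∀ n, n < D → v n = 0 := by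
  intro n hn
  rw [← Module.forall_dual_apply_eq_zero_iff ℂ]
  intro f
  have hp : (∑ j ∈ range D, Polynomial.C (f (v j)) * Polynomial.X ^ j : Polynomial ℂ) = 0 := by
    apply Polynomial.funext
    intro t
    have h1 := congrArg f (h t)
    rw [map_sum, map_zero] at h1
    simp only [map_smul, smul_eq_mul] at h1
    rw [Polynomial.eval_finset_sum, Polynomial.eval_zero]
    simp only [Polynomial.eval_mul, Polynomial.eval_C, Polynomial.eval_pow, Polynomial.eval_X]
    rw [← h1]
    exact Finset.sum_congr rfl fun j _ => mul_comm _ _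
  have h2 := congrArg (fun p => Polynomial.coeff p n) hp
  simpa [Polynomial.finset_sum_coeff, Polynomial.coeff_C_mul, Polynomial.coeff_X_pow, hn] using h2

private lemma coeff_vanish_two {V : Type*} [AddCommGroup V] [Module ℂ V]
    {D : ℕ} {c : ℕ → ℕ → V}
    (h : ∀ l m : ℂ, ∑ a ∈ range D, ∑ b ∈ range D, (l ^ a * m ^ b) • c a b = 0) :
    ∀ a, a < D → ∀ b, b < D → c a b = 0 := by
  intro a ha b hb
  have step : ∀ l : ℂ, ∑ a ∈ range D, l ^ a • c a b = 0 := by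
    intro l
    refine coeff_vanish_one (v := fun b => ∑ a ∈ range D, l ^ a • c a b) ?_ b hb
    intro t
    rw [← h l t, Finset.sum_comm]
    refine Finset.sum_congr rfl fun j _ => ?_
    rw [Finset.smul_sum]
    refine Finset.sum_congr rfl fun i _ => ?_
    rw [smul_smul, mul_comm]
  exact coeff_vanish_one (v := fun a => c a b) step a ha

private lemma tri_box {V : Type*} [AddCommMonoid V] (D : ℕ) (f : ℕ → ℕ → V)
    (hf : ∀ i b, D ≤ i + b → f i b = 0) :
    ∑ n ∈ range D, ∑ i ∈ range (n + 1), f i (n - i) =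
    ∑ i ∈ range D, ∑ b ∈ range D, f i b := by
  have h1 : ∑ n ∈ range D, ∑ i ∈ range (n + 1), f i (n - i)
      = ∑ p ∈ (range D ×ˢ range D).filter (fun p => p.1 + p.2 < D), f p.1 p.2 := by
    rw [Finset.sum_sigma']
    refine Finset.sum_nbij' (fun x => (x.2, x.1 - x.2)) (fun p => ⟨p.1 + p.2, p.1⟩) ?_ ?_ ?_ ?_ ?_
    · rintro ⟨n, i⟩ hx
      simp only [Finset.mem_sigma, Finset.mem_range] at hx
      simp only [Finset.mem_filter, Finset.mem_product, Finset.mem_range]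
      omega
    · rintro ⟨i, b⟩ hp
      simp only [Finset.mem_filter, Finset.mem_product, Finset.mem_range] at hp
      simp only [Finset.mem_sigma, Finset.mem_range]
      omega
    · rintro ⟨n, i⟩ hx
      simp only [Finset.mem_sigma, Finset.mem_range] at hx
      have hni : i + (n - i) = n := by omega
      simp [hni]
    · rintro ⟨i, b⟩ hp
      simp only [Finset.mem_filter, Finset.mem_product, Finset.mem_range] at hp
      simp only [Prod.mk.injEq]
      exact ⟨trivial, by omega⟩
    · rintro ⟨n, i⟩ _; rfl
  have h2 : ∑ p ∈ (range D ×ˢ range D).filter (fun p => ¬ p.1 + p.2 < D), f p.1 p.2 = 0 := by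
    refine Finset.sum_eq_zero fun p hp => ?_
    simp only [Finset.mem_filter] at hp
    exact hf _ _ (by omega)
  rw [h1, ← Finset.sum_product',
    ← Finset.sum_filter_add_sum_filter_not (range D ×ˢ range D) (fun p => p.1 + p.2 < D), h2,
    add_zero]

private lemma sum_lie' {g : Type*} [LieRing g] {ι : Type*} (s : Finset ι) (f : ι → g) (y : g) :
    ⁅∑ i ∈ s, f i, y⁆ = ∑ i ∈ s, ⁅f i, y⁆ := by
  induction s using Finset.cons_induction with
  | empty => simp
  | cons i s hi ih => rw [Finset.sum_cons, Finset.sum_cons, add_lie, ih]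

private lemma lie_sum' {g : Type*} [LieRing g] {ι : Type*} (s : Finset ι) (f : ι → g) (y : g) :
    ⁅y, ∑ i ∈ s, f i⁆ = ∑ i ∈ s, ⁅y, f i⁆ := by
  induction s using Finset.cons_induction with
  | empty => simp
  | cons i s hi ih => rw [Finset.sum_cons, Finset.sum_cons, lie_add, ih]

private lemma fact_ne {n : ℕ} : ((n.factorial : ℂ)) ≠ 0 :=
  Nat.cast_ne_zero.mpr (Nat.factorial_ne_zero n)

private lemma key_identity {g : Type*} [LieRing g] [LieAlgebra ℂ g]
    (T : ℕ → (g →ₗ[ℂ] g)) (N : ℕ) (hsupp : ∀ n, N < n → T n = 0)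
    (hT : ∀ (l m : ℂ) (x y : g),
      ∑ n ∈ range (N + 1), (((l + m) ^ n / n.factorial : ℂ)) •
          T n ⁅∑ k ∈ range (N + 1), ((l ^ k / k.factorial : ℂ)) • T k x, y⁆ =
        ⁅∑ n ∈ range (N + 1), ((l ^ n / n.factorial : ℂ)) • T n x,
          ∑ k ∈ range (N + 1), ((m ^ k / k.factorial : ℂ)) • T k y⁆)
    (x y : g) (a b : ℕ) :
    ∑ k ∈ range (a + 1), (a.choose k : ℂ) • T (a + b - k) ⁅T k x, y⁆ = ⁅T a x, T b y⁆ := by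
  set D := 2 * N + 2 with hD
  set u : ℕ → g := fun k => ⁅T k x, y⁆ with hu
  have hTz : ∀ n (z : g), N < n → T n z = 0 := fun n z hn => by rw [hsupp n hn]; rfl
  have huz : ∀ k, N < k → u k = 0 := fun k hk => by
    simp only [hu]; rw [hTz k x hk, zero_lie]
  -- the coefficient family
  set c : ℕ → ℕ → g := fun p q =>
    (∑ k ∈ range (p + 1),
        ((((p - k).factorial * q.factorial * k.factorial : ℕ) : ℂ))⁻¹ • T (p + q - k) (u k)) -
      (((p.factorial * q.factorial : ℕ) : ℂ))⁻¹ • ⁅T p x, T q y⁆ with hc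
  -- main extraction
  have hc0 : ∀ l m : ℂ, ∑ p ∈ range D, ∑ q ∈ range D, (l ^ p * m ^ q) • c p q = 0 := by
    intro l m
    have base := hT l m x y
    -- expand LHS of base into double sum over range (N+1)
    have hL0 : ∑ n ∈ range (N + 1), (((l + m) ^ n / n.factorial : ℂ)) •
          T n ⁅∑ k ∈ range (N + 1), ((l ^ k / k.factorial : ℂ)) • T k x, y⁆ =
        ∑ n ∈ range (N + 1), ∑ k ∈ range (N + 1),
          (((l + m) ^ n / n.factorial) * (l ^ k / k.factorial) : ℂ) • T n (u k) := by
      refine Finset.sum_congr rfl fun n _ => ?_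
      rw [sum_lie']
      have : ∀ k ∈ range (N+1), ⁅((l ^ k / k.factorial : ℂ)) • T k x, y⁆
          = ((l ^ k / k.factorial : ℂ)) • u k := fun k _ => smul_lie _ _ _
      rw [Finset.sum_congr rfl this, map_sum, Finset.smul_sum]
      refine Finset.sum_congr rfl fun k _ => ?_
      rw [map_smul, smul_smul]
    -- expand RHS of base
    have hR0 : ⁅∑ n ∈ range (N + 1), ((l ^ n / n.factorial : ℂ)) • T n x,
          ∑ k ∈ range (N + 1), ((m ^ k / k.factorial : ℂ)) • T k y⁆ =
        ∑ n ∈ range (N + 1), ∑ k ∈ range (N + 1),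
          ((l ^ n / n.factorial) * (m ^ k / k.factorial) : ℂ) • ⁅T n x, T k y⁆ := by
      rw [sum_lie']
      refine Finset.sum_congr rfl fun n _ => ?_
      rw [smul_lie, lie_sum', Finset.smul_sum]
      refine Finset.sum_congr rfl fun k _ => ?_
      rw [lie_smul, smul_smul]
    rw [hL0, hR0] at base
    -- extend ranges to D
    have hsub : range (N + 1) ⊆ range D := by
      intro t ht; simp only [Finset.mem_range] at *; omega
    have notmem : ∀ t, t ∈ range D → t ∉ range (N + 1) → N < t := by
      intro t _ ht; simp only [Finset.mem_range] at ht; omega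
    have hL1 : ∑ n ∈ range (N + 1), ∑ k ∈ range (N + 1),
          (((l + m) ^ n / n.factorial) * (l ^ k / k.factorial) : ℂ) • T n (u k) =
        ∑ n ∈ range D, ∑ k ∈ range D,
          (((l + m) ^ n / n.factorial) * (l ^ k / k.factorial) : ℂ) • T n (u k) := by
      rw [Finset.sum_subset hsub]
      · refine Finset.sum_congr rfl fun n _ => Finset.sum_subset hsub fun k hk hk' => ?_
        rw [huz k (notmem k hk hk'), map_zero, smul_zero]
      · intro n hn hn'
        refine Finset.sum_eq_zero fun k _ => ?_
        rw [hTz n _ (notmem n hn hn'), smul_zero]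
    have hR1 : ∑ n ∈ range (N + 1), ∑ k ∈ range (N + 1),
          ((l ^ n / n.factorial) * (m ^ k / k.factorial) : ℂ) • ⁅T n x, T k y⁆ =
        ∑ n ∈ range D, ∑ k ∈ range D,
          ((l ^ n / n.factorial) * (m ^ k / k.factorial) : ℂ) • ⁅T n x, T k y⁆ := by
      rw [Finset.sum_subset hsub]
      · refine Finset.sum_congr rfl fun n _ => Finset.sum_subset hsub fun k hk hk' => ?_
        rw [hTz k y (notmem k hk hk'), lie_zero, smul_zero]
      · intro n hn hn'
        refine Finset.sum_eq_zero fun k _ => ?_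
        rw [hTz n x (notmem n hn hn'), zero_lie, smul_zero]
    rw [hL1, hR1] at base
    -- split the goal into the two double sums
    have split : ∑ p ∈ range D, ∑ q ∈ range D, (l ^ p * m ^ q) • c p q =
        (∑ p ∈ range D, ∑ q ∈ range D, (l ^ p * m ^ q) •
          (∑ k ∈ range (p + 1),
            ((((p - k).factorial * q.factorial * k.factorial : ℕ) : ℂ))⁻¹ • T (p + q - k) (u k))) -
        (∑ p ∈ range D, ∑ q ∈ range D, (l ^ p * m ^ q) •
          ((((p.factorial * q.factorial : ℕ) : ℂ))⁻¹ • ⁅T p x, T q y⁆)) := by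
      rw [← Finset.sum_sub_distrib]
      refine Finset.sum_congr rfl fun p _ => ?_
      rw [← Finset.sum_sub_distrib]
      refine Finset.sum_congr rfl fun q _ => ?_
      rw [hc, smul_sub]
    -- identify the R-part with the RHS of base
    have hRpart : ∑ p ∈ range D, ∑ q ∈ range D, (l ^ p * m ^ q) •
          ((((p.factorial * q.factorial : ℕ) : ℂ))⁻¹ • ⁅T p x, T q y⁆) =
        ∑ n ∈ range D, ∑ k ∈ range D,
          ((l ^ n / n.factorial) * (m ^ k / k.factorial) : ℂ) • ⁅T n x, T k y⁆ := by
      refine Finset.sum_congr rfl fun p _ => Finset.sum_congr rfl fun q _ => ?_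
      rw [smul_smul]
      congr 1
      push_cast
      field_simp
    -- identify the S-part with the LHS of base
    have hSpart : ∑ p ∈ range D, ∑ q ∈ range D, (l ^ p * m ^ q) •
          (∑ k ∈ range (p + 1),
            ((((p - k).factorial * q.factorial * k.factorial : ℕ) : ℂ))⁻¹ • T (p + q - k) (u k)) =
        ∑ n ∈ range D, ∑ k ∈ range D,
          (((l + m) ^ n / n.factorial) * (l ^ k / k.factorial) : ℂ) • T n (u k) := by
      set f : ℕ → ℕ → g := fun k i => ∑ q ∈ range D,
        (l ^ (k + i) * m ^ q * (((i.factorial * q.factorial * k.factorial : ℕ) : ℂ))⁻¹) •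
          T (i + q) (u k) with hf
      have hf0 : ∀ k i, D ≤ k + i → f k i = 0 := by
        intro k i hki
        refine Finset.sum_eq_zero fun q _ => ?_
        by_cases hk : N < k
        · rw [huz k hk, map_zero, smul_zero]
        · rw [hTz (i + q) (u k) (by omega), smul_zero]
      have step1 : ∑ p ∈ range D, ∑ q ∈ range D, (l ^ p * m ^ q) •
            (∑ k ∈ range (p + 1),
              ((((p - k).factorial * q.factorial * k.factorial : ℕ) : ℂ))⁻¹ •
                T (p + q - k) (u k)) =
          ∑ p ∈ range D, ∑ k ∈ range (p + 1), f k (p - k) := by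
        refine Finset.sum_congr rfl fun p _ => ?_
        have e1 : ∑ q ∈ range D, (l ^ p * m ^ q) •
              (∑ k ∈ range (p + 1),
                ((((p - k).factorial * q.factorial * k.factorial : ℕ) : ℂ))⁻¹ •
                  T (p + q - k) (u k)) =
            ∑ q ∈ range D, ∑ k ∈ range (p + 1),
              (l ^ p * m ^ q * ((((p - k).factorial * q.factorial * k.factorial : ℕ) : ℂ))⁻¹) •
                T (p + q - k) (u k) := by
          refine Finset.sum_congr rfl fun q _ => ?_
          rw [Finset.smul_sum]
          exact Finset.sum_congr rfl fun k _ => smul_smul _ _ _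
        rw [e1, Finset.sum_comm]
        refine Finset.sum_congr rfl fun k hk => ?_
        have hk' : k ≤ p := Nat.lt_succ_iff.mp (Finset.mem_range.mp hk)
        rw [hf]
        refine Finset.sum_congr rfl fun q _ => ?_
        rw [show k + (p - k) = p from by omega, show (p - k) + q = p + q - k from by omega]
      rw [step1, tri_box D f hf0]
      conv_rhs => rw [Finset.sum_comm]
      refine Finset.sum_congr rfl fun k _ => ?_
      set fh : ℕ → ℕ → g := fun i b =>
        (l ^ (k + i) * m ^ b * (((i.factorial * b.factorial * k.factorial : ℕ) : ℂ))⁻¹) •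
          T (i + b) (u k) with hfh
      have hfh0 : ∀ i b, D ≤ i + b → fh i b = 0 := by
        intro i b hib
        rw [hfh]
        simp only
        rw [hTz (i + b) (u k) (by omega), smul_zero]
      have : f k = fun i => ∑ q ∈ range D, fh i q := by
        funext i; rfl
      rw [this]
      rw [← tri_box D fh hfh0]
      refine (Finset.sum_congr rfl fun n _ => ?_).symm
      have expand : (((l + m) ^ n / n.factorial) * (l ^ k / k.factorial) : ℂ) =
          ∑ i ∈ range (n + 1), l ^ (k + i) * m ^ (n - i) *
            (((i.factorial * (n - i).factorial * k.factorial : ℕ) : ℂ))⁻¹ := by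
        rw [add_pow, Finset.sum_div, Finset.sum_mul]
        refine Finset.sum_congr rfl fun i hi => ?_
        have hi' : i ≤ n := Nat.lt_succ_iff.mp (Finset.mem_range.mp hi)
        rw [Nat.cast_choose ℂ hi']
        have h1 : (i.factorial : ℂ) ≠ 0 := fact_ne
        have h2 : ((n - i).factorial : ℂ) ≠ 0 := fact_ne
        have h3 : (k.factorial : ℂ) ≠ 0 := fact_ne
        have h4 : (n.factorial : ℂ) ≠ 0 := fact_ne
        push_cast
        field_simp
        ring
      rw [expand, Finset.sum_smul]
      refine Finset.sum_congr rfl fun i hi => ?_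
      have hi' : i ≤ n := Nat.lt_succ_iff.mp (Finset.mem_range.mp hi)
      rw [hfh]
      simp only
      rw [show i + (n - i) = n from by omega]
    rw [split, hRpart, hSpart, base, sub_self]
  -- now use the coefficient vanishing
  by_cases hab : a < D ∧ b < D
  · have h0 := coeff_vanish_two hc0 a hab.1 b hab.2
    rw [hc] at h0
    simp only at h0
    rw [sub_eq_zero] at h0
    have hne : ((a.factorial * b.factorial : ℕ) : ℂ) ≠ 0 :=
      Nat.cast_ne_zero.mpr (mul_ne_zero (Nat.factorial_ne_zero a) (Nat.factorial_ne_zero b))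
    calc ∑ k ∈ range (a + 1), (a.choose k : ℂ) • T (a + b - k) (u k)
        = ∑ k ∈ range (a + 1), (((a.factorial * b.factorial : ℕ) : ℂ) *
            ((((a - k).factorial * b.factorial * k.factorial : ℕ) : ℂ))⁻¹) •
              T (a + b - k) (u k) := by
          refine Finset.sum_congr rfl fun k hk => ?_
          have hk' : k ≤ a := Nat.lt_succ_iff.mp (Finset.mem_range.mp hk)
          congr 1
          rw [Nat.cast_choose ℂ hk']
          have h1 : ((a - k).factorial : ℂ) ≠ 0 := fact_ne
          have h2 : (b.factorial : ℂ) ≠ 0 := fact_ne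
          have h3 : (k.factorial : ℂ) ≠ 0 := fact_ne
          have h4 : (a.factorial : ℂ) ≠ 0 := fact_ne
          push_cast
          field_simp
      _ = ((a.factorial * b.factorial : ℕ) : ℂ) • ∑ k ∈ range (a + 1),
            ((((a - k).factorial * b.factorial * k.factorial : ℕ) : ℂ))⁻¹ •
              T (a + b - k) (u k) := by
          rw [Finset.smul_sum]
          exact Finset.sum_congr rfl fun k _ => (smul_smul _ _ _).symm
      _ = ((a.factorial * b.factorial : ℕ) : ℂ) •
            (((a.factorial * b.factorial : ℕ) : ℂ))⁻¹ • ⁅T a x, T b y⁆ := by rw [h0]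
      _ = ⁅T a x, T b y⁆ := by rw [smul_smul, mul_inv_cancel₀ hne, one_smul]
  · have hcase : D ≤ a ∨ D ≤ b := by omega
    rcases hcase with hc1 | hc2
    · rw [hTz a x (by omega), zero_lie]
      refine Finset.sum_eq_zero fun k hk => ?_
      have hk' : k ≤ a := Nat.lt_succ_iff.mp (Finset.mem_range.mp hk)
      by_cases hkN : N < k
      · rw [hsupp k hkN]
        simp
      · rw [hTz (a + b - k) ⁅(T k) x, y⁆ (by omega), smul_zero]
    · rw [hTz b y (by omega), lie_zero]
      refine Finset.sum_eq_zero fun k hk => ?_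
      have hk' : k ≤ a := Nat.lt_succ_iff.mp (Finset.mem_range.mp hk)
      rw [hTz (a + b - k) ⁅(T k) x, y⁆ (by omega), smul_zero]

private lemma perfect_span {g : Type*} [LieRing g] [LieAlgebra ℂ g] (g₀ : LieIdeal ℂ g) [LieAlgebra.IsSemisimple ℂ ↥g₀]
    {a : g} (ha : a ∈ g₀) :
    a ∈ Submodule.span ℂ {v : g | ∃ c, c ∈ g₀ ∧ ∃ d, d ∈ g₀ ∧ ⁅c, d⁆ = v} := by
  have hperf : ⁅(⊤ : LieIdeal ℂ ↥g₀), (⊤ : LieIdeal ℂ ↥g₀)⁆ = ⊤ := by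
    have hsup : sSup {I : LieIdeal ℂ ↥g₀ | IsAtom I} ≤ ⁅(⊤ : LieIdeal ℂ ↥g₀), (⊤ : LieIdeal ℂ ↥g₀)⁆ := by
      refine sSup_le fun I hI => ?_
      have h1 : ⁅I, I⁆ ≤ I := LieSubmodule.lie_le_right I I
      rcases eq_or_lt_of_le h1 with heq | hlt
      · calc I = ⁅I, I⁆ := heq.symm
          _ ≤ ⁅(⊤ : LieIdeal ℂ ↥g₀), (⊤ : LieIdeal ℂ ↥g₀)⁆ := LieSubmodule.mono_lie le_top le_top
      · exfalso
        have hbot : ⁅I, I⁆ = ⊥ := hI.2 _ hlt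
        exact LieAlgebra.IsSemisimple.non_abelian_of_isAtom I hI
          ((LieSubmodule.lie_abelian_iff_lie_self_eq_bot I).mpr hbot)
    rw [LieAlgebra.IsSemisimple.sSup_atoms_eq_top] at hsup
    exact eq_top_iff.mpr hsup
  have hmem : (⟨a, ha⟩ : ↥g₀) ∈ (⁅(⊤ : LieIdeal ℂ ↥g₀), (⊤ : LieIdeal ℂ ↥g₀)⁆ :
      LieIdeal ℂ ↥g₀) := by rw [hperf]; trivial
  rw [← LieSubmodule.mem_toSubmodule, LieSubmodule.lieIdeal_oper_eq_linear_span] at hmem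
  have := Submodule.mem_map_of_mem (f := (g₀ : Submodule ℂ g).subtype) hmem
  erw [Submodule.map_span] at this
  refine Submodule.span_mono ?_ this
  rintro v ⟨w, ⟨cc, dd, hw⟩, rfl⟩
  exact ⟨(cc : ↥g₀), (cc : ↥g₀).2, (dd : ↥g₀), (dd : ↥g₀).2, by
    rw [← hw]; rfl⟩

/-- Let `g = g₀ ⊕ Z` be a finite-dimensional reductive complex Lie algebra (`g₀`
semisimple, `Z` the center) and `T_λ` a conformal averaging operator on `g` with
`g₀ ⊆ T_*(g)`.  Then `T_*(g₀) = g₀`, `T_*(Z) ⊆ Z`, and the restriction of `T_λ` to `g₀`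
is an ordinary averaging operator: `T_λ(a) = T₀(a) ∈ g₀` for `a ∈ g₀`. -/
theorem conformal_averaging_on_reductive {g : Type*} [LieRing g] [LieAlgebra ℂ g]
    [FiniteDimensional ℂ g]
    (g₀ : LieIdeal ℂ g) [LieAlgebra.IsSemisimple ℂ ↥g₀]
    (hred : IsCompl g₀.toSubmodule (LieAlgebra.center ℂ g).toSubmodule)
    (T : ℕ → (g →ₗ[ℂ] g)) (N : ℕ) (hsupp : ∀ n, N < n → T n = 0)
    (hT : ∀ (l m : ℂ) (x y : g),
      ∑ n ∈ range (N + 1), (((l + m) ^ n / n.factorial : ℂ)) •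
          T n ⁅∑ k ∈ range (N + 1), ((l ^ k / k.factorial : ℂ)) • T k x, y⁆ =
        ⁅∑ n ∈ range (N + 1), ((l ^ n / n.factorial : ℂ)) • T n x,
          ∑ k ∈ range (N + 1), ((m ^ k / k.factorial : ℂ)) • T k y⁆)
    (hhom : g₀.toSubmodule ≤
      Submodule.span ℂ {x : g | ∃ n : ℕ, ∃ a : g, T n a = x}) :
    (Submodule.span ℂ {x : g | ∃ n : ℕ, ∃ a ∈ g₀, T n a = x} = g₀.toSubmodule) ∧
    (Submodule.span ℂ {x : g | ∃ n : ℕ, ∃ z ∈ LieAlgebra.center ℂ g, T n z = x} ≤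
      (LieAlgebra.center ℂ g).toSubmodule) ∧
    (∀ a ∈ g₀, T 0 a ∈ g₀ ∧ ∀ n : ℕ, 1 ≤ n → T n a = 0) := by
  classical
  have KI := key_identity T N hsupp hT
  have hTz : ∀ (n : ℕ) (z : g), N < n → T n z = 0 := fun n z hn => by rw [hsupp n hn]; rfl
  -- decomposition of any element
  have hdec : ∀ u : g, ∃ p ∈ g₀.toSubmodule, ∃ q ∈ (LieAlgebra.center ℂ g).toSubmodule,
      u = p + q := by
    intro u
    have hu : u ∈ g₀.toSubmodule ⊔ (LieAlgebra.center ℂ g).toSubmodule := by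
      rw [hred.sup_eq_top]; trivial
    rcases Submodule.mem_sup.mp hu with ⟨p, hp, q, hq, h⟩
    exact ⟨p, hp, q, hq, h.symm⟩
  have hcenmem : ∀ q : g, q ∈ (LieAlgebra.center ℂ g).toSubmodule → ∀ v : g, ⁅v, q⁆ = 0 := by
    intro q hq v
    exact (LieModule.mem_maxTrivSubmodule ℂ g g q).mp hq v
  have hcen0 : ∀ q : g, q ∈ (LieAlgebra.center ℂ g).toSubmodule → ∀ v : g, ⁅q, v⁆ = 0 := by
    intro q hq v
    rw [← lie_skew, hcenmem q hq v, neg_zero]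
  -- every bracket lands in g₀
  have br : ∀ u v : g, ⁅u, v⁆ ∈ g₀.toSubmodule := by
    intro u v
    rcases hdec u with ⟨p, hp, q, hq, rfl⟩
    rw [add_lie, hcen0 q hq v, add_zero, ← lie_skew]
    exact neg_mem (g₀.lie_mem hp)
  -- T m of any basic bracket is in g₀
  have hTu : ∀ k (m : ℕ) (x y : g), T m ⁅T k x, y⁆ ∈ g₀.toSubmodule := by
    intro k
    induction k using Nat.strong_induction_on with
    | _ k IH =>
      intro m x y
      have h := KI x y k m
      rw [Finset.sum_range_succ, Nat.choose_self, Nat.cast_one, one_smul,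
        show k + m - k = m by omega] at h
      have heq : T m ⁅T k x, y⁆ = ⁅T k x, T m y⁆ -
          ∑ j ∈ range k, (k.choose j : ℂ) • T (k + m - j) ⁅T j x, y⁆ := by
        rw [← h]; abel
      rw [heq]
      refine sub_mem (br _ _) (Submodule.sum_mem _ fun j hj => Submodule.smul_mem _ _ ?_)
      exact IH j (Finset.mem_range.mp hj) (k + m - j) x y
  set spanT := Submodule.span ℂ {x : g | ∃ n : ℕ, ∃ a : g, T n a = x} with hspanT
  set S₀ := Submodule.span ℂ {x : g | ∃ n : ℕ, ∃ a ∈ g₀, T n a = x} with hS₀def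
  -- brackets of spanT elements land in S₀
  have hbr2 : ∀ c ∈ spanT, ∀ d ∈ spanT, ⁅c, d⁆ ∈ S₀ := by
    intro c hc
    refine Submodule.span_induction (p := fun c _ => ∀ d ∈ spanT, ⁅c, d⁆ ∈ S₀)
      ?_ ?_ ?_ ?_ hc
    · rintro cx ⟨na, xa, rfl⟩ d hd
      refine Submodule.span_induction (p := fun d _ => ⁅T na xa, d⁆ ∈ S₀) ?_ ?_ ?_ ?_ hd
      · rintro dx ⟨nb, xb, rfl⟩
        show ⁅T na xa, T nb xb⁆ ∈ S₀
        rw [← KI xa xb na nb]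
        refine Submodule.sum_mem _ fun j _ => Submodule.smul_mem _ _ ?_
        exact Submodule.subset_span ⟨na + nb - j, ⁅T j xa, xb⁆, br _ _, rfl⟩
      · simp only [lie_zero]; exact Submodule.zero_mem _
      · intro u v _ _ hu hv; simp only [lie_add]; exact Submodule.add_mem _ hu hv
      · intro t u _ hu; simp only [lie_smul]; exact Submodule.smul_mem _ _ hu
    · intro d hd; simp only [zero_lie]; exact Submodule.zero_mem _
    · intro u v _ _ hu hv d hd; simp only [add_lie]; exact Submodule.add_mem _ (hu d hd) (hv d hd)
    · intro t u _ hu d hd; simp only [smul_lie]; exact Submodule.smul_mem _ _ (hu d hd)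
  -- g₀ ≤ S₀
  have hg₀S : g₀.toSubmodule ≤ S₀ := by
    intro a ha
    have hsp := perfect_span g₀ ha
    refine Submodule.span_induction (p := fun v _ => v ∈ S₀) ?_ ?_ ?_ ?_ hsp
    · rintro v ⟨c, hcg, d, hdg, rfl⟩
      exact hbr2 c (hhom hcg) d (hhom hdg)
    · exact Submodule.zero_mem _
    · intro u v _ _ hu hv; exact Submodule.add_mem _ hu hv
    · intro t u _ hu; exact Submodule.smul_mem _ _ hu
  -- membership of g₀ in the span of basic brackets
  have hbrMem : ∀ d : g, ∀ c ∈ spanT, ⁅c, d⁆ ∈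
      Submodule.span ℂ {v : g | ∃ (k : ℕ) (x y' : g), v = ⁅T k x, y'⁆} := by
    intro d c hc
    refine Submodule.span_induction
      (p := fun c _ => ⁅c, d⁆ ∈
        Submodule.span ℂ {v : g | ∃ (k : ℕ) (x y' : g), v = ⁅T k x, y'⁆}) ?_ ?_ ?_ ?_ hc
    · rintro v ⟨n, xv, rfl⟩
      exact Submodule.subset_span ⟨n, xv, d, rfl⟩
    · simp only [zero_lie]; exact Submodule.zero_mem _
    · intro u v _ _ hu hv; simp only [add_lie]; exact Submodule.add_mem _ hu hv
    · intro t u _ hu; simp only [smul_lie]; exact Submodule.smul_mem _ _ hu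
  have hg₀Br : ∀ a, a ∈ g₀.toSubmodule →
      a ∈ Submodule.span ℂ {v : g | ∃ (k : ℕ) (x y' : g), v = ⁅T k x, y'⁆} := by
    intro a ha
    have hsp := perfect_span g₀ ha
    refine Submodule.span_induction
      (p := fun v _ => v ∈ Submodule.span ℂ {v : g | ∃ (k : ℕ) (x y' : g), v = ⁅T k x, y'⁆})
      ?_ ?_ ?_ ?_ hsp
    · rintro v ⟨c, hcg, d, hdg, rfl⟩
      exact hbrMem d c (hhom hcg)
    · exact Submodule.zero_mem _
    · intro u v _ _ hu hv; exact Submodule.add_mem _ hu hv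
    · intro t u _ hu; exact Submodule.smul_mem _ _ hu
  -- T preserves g₀
  have hTg₀ : ∀ (n : ℕ) (a : g), a ∈ g₀.toSubmodule → T n a ∈ g₀.toSubmodule := by
    intro n a ha
    have h := hg₀Br a ha
    have key : ∀ v, v ∈ Submodule.span ℂ {v : g | ∃ (k : ℕ) (x y' : g), v = ⁅T k x, y'⁆} →
        ∀ m, T m v ∈ g₀.toSubmodule := by
      intro v hv
      refine Submodule.span_induction
        (p := fun v _ => ∀ m, T m v ∈ g₀.toSubmodule) ?_ ?_ ?_ ?_ hv
      · rintro w ⟨k, xw, yw, rfl⟩ m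
        exact hTu k m xw yw
      · intro m; simp only [map_zero]; exact Submodule.zero_mem _
      · intro u v _ _ hu hv m; simp only [map_add]; exact Submodule.add_mem _ (hu m) (hv m)
      · intro t u _ hu m; simp only [map_smul]; exact Submodule.smul_mem _ _ (hu m)
    exact key a h n
  have hS₀le : S₀ ≤ g₀.toSubmodule := by
    rw [hS₀def, Submodule.span_le]
    rintro v ⟨n, a, ha, rfl⟩
    exact hTg₀ n a ha
  have conclusion1 : S₀ = g₀.toSubmodule := le_antisymm hS₀le hg₀S
  -- the center part
  have hzb : ∀ (x z : g), z ∈ (LieAlgebra.center ℂ g).toSubmodule →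
      ∀ a b, ⁅T a x, T b z⁆ = 0 := by
    intro x z hz a b
    rw [← KI x z a b]
    refine Finset.sum_eq_zero fun j _ => ?_
    rw [hcenmem z hz (T j x), map_zero, smul_zero]
  have hTzZ : ∀ (b : ℕ) (z : g), z ∈ (LieAlgebra.center ℂ g).toSubmodule →
      T b z ∈ (LieAlgebra.center ℂ g).toSubmodule := by
    intro b z hz
    have hall : ∀ c ∈ spanT, ⁅c, T b z⁆ = 0 := by
      intro c hc
      refine Submodule.span_induction (p := fun c _ => ⁅c, T b z⁆ = 0) ?_ ?_ ?_ ?_ hc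
      · rintro v ⟨n, xv, rfl⟩; exact hzb xv z hz n b
      · simp only [zero_lie]
      · intro u v _ _ hu hv; simp only [add_lie, hu, hv, add_zero]
      · intro t u _ hu; simp only [smul_lie, hu, smul_zero]
    rcases hdec (T b z) with ⟨p, hp, q, hq, hw⟩
    have hp0 : p = 0 := by
      have hcp : ∀ c : g, c ∈ g₀.toSubmodule → ⁅c, p⁆ = 0 := by
        intro c hcg
        have h1 : ⁅c, T b z⁆ = 0 := hall c (hhom hcg)
        have h2 : ⁅c, q⁆ = 0 := hcenmem q hq c
        have h3 : ⁅c, p⁆ + ⁅c, q⁆ = 0 := by rw [← lie_add, ← hw, h1]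
        rwa [h2, add_zero] at h3
      have hcenter : (⟨p, hp⟩ : ↥g₀) ∈ LieAlgebra.center ℂ ↥g₀ := by
        rw [LieModule.mem_maxTrivSubmodule]
        intro c
        have hcoe : ((⁅c, (⟨p, hp⟩ : ↥g₀)⁆ : ↥g₀) : g) = ⁅(c : g), p⁆ := rfl
        exact Subtype.ext (by rw [hcoe]; exact hcp (c : g) c.2)
      rw [LieAlgebra.center_eq_bot, LieSubmodule.mem_bot] at hcenter
      exact congrArg Subtype.val hcenter
    rw [hw, hp0, zero_add]; exact hq
  have conclusion2 : Submodule.span ℂ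
      {x : g | ∃ n : ℕ, ∃ z ∈ LieAlgebra.center ℂ g, T n z = x} ≤
      (LieAlgebra.center ℂ g).toSubmodule := by
    rw [Submodule.span_le]
    rintro v ⟨n, z, hz, rfl⟩
    exact hTzZ n z hz
  -- vanishing for n ≥ 1
  have hvanish : ∀ n : ℕ, 1 ≤ n → ∀ a, a ∈ g₀.toSubmodule → T n a = 0 := by
    by_contra hcon
    push_neg at hcon
    obtain ⟨n₀, hn₀1, a₀, ha₀, hne⟩ := hcon
    set P : ℕ → Prop := fun m => ∃ a, a ∈ g₀.toSubmodule ∧ T m a ≠ 0 with hP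
    have hn₀N : n₀ ≤ N := by
      by_contra h
      exact hne (hTz n₀ a₀ (by omega))
    have hPn₀ : P n₀ := ⟨a₀, ha₀, hne⟩
    set M := Nat.findGreatest P N with hMdef
    have hPM : P M := Nat.findGreatest_spec hn₀N hPn₀
    have hM1 : 1 ≤ M := le_trans hn₀1 (Nat.le_findGreatest hn₀N hPn₀)
    have hmax : ∀ j, M < j → ∀ a, a ∈ g₀.toSubmodule → T j a = 0 := by
      intro j hj a ha
      by_cases hjN : j ≤ N
      · by_contra hne'
        exact Nat.findGreatest_is_greatest hj hjN ⟨a, ha, hne'⟩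
      · exact hTz j a (by omega)
    have hcomm : ∀ (a : ℕ) (x y : g), T M ⁅T a x, y⁆ = ⁅T a x, T M y⁆ := by
      intro a x y
      have h := KI x y a M
      rw [Finset.sum_range_succ, Nat.choose_self, Nat.cast_one, one_smul,
        show a + M - a = M by omega] at h
      have hz0 : ∑ j ∈ range a, (a.choose j : ℂ) • T (a + M - j) ⁅T j x, y⁆ = 0 := by
        refine Finset.sum_eq_zero fun j hj => ?_
        have hjlt := Finset.mem_range.mp hj
        rw [hmax (a + M - j) (by omega) _ (br (T j x) y), smul_zero]
      rw [hz0, zero_add] at h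
      exact h
    have habel : ∀ x y : g, x ∈ g₀.toSubmodule → ⁅T M x, T M y⁆ = 0 := by
      intro x y hx
      rw [← hcomm M x y]
      have h := KI x y (2 * M) 0
      rw [hmax (2 * M) (by omega) x hx, zero_lie] at h
      have hsingle : ∑ k ∈ range (2 * M + 1),
          ((2 * M).choose k : ℂ) • T (2 * M + 0 - k) ⁅T k x, y⁆ =
          ((2 * M).choose M : ℂ) • T (2 * M + 0 - M) ⁅T M x, y⁆ := by
        refine Finset.sum_eq_single_of_mem M (by simp; omega) fun j hj hjne => ?_
        have hjlt := Finset.mem_range.mp hj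
        rcases Nat.lt_or_ge j M with hjM | hjM
        · rw [hmax (2 * M + 0 - j) (by omega) _ (br (T j x) y), smul_zero]
        · have hjM' : M < j := by omega
          rw [hmax j hjM' x hx, zero_lie, map_zero, smul_zero]
      rw [hsingle, show 2 * M + 0 - M = M by omega] at h
      have hch : ((2 * M).choose M : ℂ) ≠ 0 :=
        Nat.cast_ne_zero.mpr (Nat.choose_pos (by omega)).ne'
      rcases smul_eq_zero.mp h with h' | h'
      · exact absurd h' hch
      · exact h'
    set W := Submodule.map (T M) g₀.toSubmodule with hWdef
    have hWle : W ≤ g₀.toSubmodule := by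
      rintro w ⟨a, ha, rfl⟩
      exact hTg₀ M a ha
    have hWlie : ∀ c, c ∈ g₀.toSubmodule → ∀ w ∈ W, ⁅c, w⁆ ∈ W := by
      intro c hc w hw
      rcases hw with ⟨a, ha, rfl⟩
      refine Submodule.span_induction (p := fun c _ => ⁅c, T M a⁆ ∈ W) ?_ ?_ ?_ ?_ (hhom hc)
      · rintro v ⟨n, xv, rfl⟩
        show ⁅T n xv, T M a⁆ ∈ W
        rw [← hcomm n xv a]
        exact ⟨⁅T n xv, a⁆, br _ _, rfl⟩
      · simp only [zero_lie]; exact Submodule.zero_mem _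
      · intro u v _ _ hu hv; simp only [add_lie]; exact Submodule.add_mem _ hu hv
      · intro t u _ hu; simp only [smul_lie]; exact Submodule.smul_mem _ _ hu
    have hWab : ∀ w ∈ W, ∀ w' ∈ W, ⁅w, w'⁆ = 0 := by
      rintro w ⟨a, ha, rfl⟩ w' ⟨b', hb', rfl⟩
      exact habel a b' ha
    set W' : LieIdeal ℂ ↥g₀ :=
      { Submodule.comap (g₀.toSubmodule).subtype W with
        lie_mem := by
          intro cx mx hmx
          show ((⁅cx, mx⁆ : ↥g₀) : g) ∈ W
          have hcoe : ((⁅cx, mx⁆ : ↥g₀) : g) = ⁅(cx : g), (mx : g)⁆ := rfl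
          rw [hcoe]
          exact hWlie _ cx.2 _ hmx } with hW'def
    have hW'ab : IsLieAbelian ↥W' := by
      constructor
      intro u v
      have h0 : ⁅((u : ↥g₀) : g), ((v : ↥g₀) : g)⁆ = 0 := hWab _ u.2 _ v.2
      apply Subtype.ext
      apply Subtype.ext
      show ((((⁅u, v⁆ : ↥W') : ↥g₀)) : g) = ((((0 : ↥W') : ↥g₀)) : g)
      have hcoe : ((((⁅u, v⁆ : ↥W') : ↥g₀)) : g) = ⁅((u : ↥g₀) : g), ((v : ↥g₀) : g)⁆ := rfl
      rw [hcoe, h0]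
      rfl
    have hW'bot : W' = ⊥ := by
      have hinst : LieAlgebra.HasTrivialRadical ℂ ↥g₀ := inferInstance
      rw [LieAlgebra.hasTrivialRadical_iff_no_abelian_ideals] at hinst
      exact hinst W' hW'ab
    obtain ⟨a, ha, hne'⟩ := hPM
    have hmem : T M a ∈ W := ⟨a, ha, rfl⟩
    have hinW' : (⟨T M a, hWle hmem⟩ : ↥g₀) ∈ W' := hmem
    rw [hW'bot, LieSubmodule.mem_bot] at hinW'
    exact hne' (congrArg Subtype.val hinW')
  exact ⟨conclusion1, conclusion2, fun a ha => ⟨hTg₀ 0 a ha, fun n hn => hvanish n hn a ha⟩⟩
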